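/- With stiffness ξ uniform on [k_a,k_b], 0 < k_a < k_b, the second moment of the acceleration response ü(t,ξ) = −(ξ/m)·u(t,ξ), where u(t,ξ) = a·cos(√(ξ/m)t) + (b/√(ξ/m))·sin(√(ξ/m)t), satisfies lim_{t→∞} (1/(k_b−k_a)) ∫_{k_a}^{k_b} ü(t,ξ)² dξ = ((k_a² + k_a·k_b + k_b²)/(6m²))·a² + ((k_a+k_b)/(4m))·b². -/

import Mathlib

open Filter intervalIntegral Real

private lemma osc_gen (f f' : ℝ → ℝ) (α β : ℝ)
    (hf : ∀ x, HasDerivAt f (f' x) x) (hc : Continuous f')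
    (w : ℝ → ℝ → ℝ) (V : ℝ → ℝ → ℝ)
    (hw : ∀ t, 0 < t → ∀ x, HasDerivAt (fun x => V t x) (w t x) x)
    (hVb : ∀ t x, 0 < t → |V t x| ≤ 1 / (2*t))
    (hwc : ∀ t, Continuous (w t)) :
    Tendsto (fun t => ∫ u in α..β, f u * w t u) atTop (nhds 0) := by
  obtain ⟨M, hM⟩ : ∃ M, ∀ x ∈ Set.uIcc α β, |f' x| ≤ M := by
    obtain ⟨M, hM⟩ := isCompact_uIcc.exists_bound_of_continuousOn hc.continuousOn
    exact ⟨M, fun x hx => by simpa using hM x hx⟩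
  set K := |f β| + |f α| + M * |β - α| with hK
  apply squeeze_zero_norm' (a := fun t => K / (2*t))
  · filter_upwards [eventually_gt_atTop 0] with t ht
    rw [integral_mul_deriv_eq_deriv_mul (fun x _ => hf x) (fun x _ => hw t ht x)
      (hc.intervalIntegrable _ _) ((hwc t).intervalIntegrable _ _)]
    have h2t : (0:ℝ) < 2*t := by linarith
    have hI : ‖∫ x in α..β, f' x * V t x‖ ≤ (M * (1/(2*t))) * |β - α| := by
      apply intervalIntegral.norm_integral_le_of_norm_le_const
      intro x hx
      have hx' : x ∈ Set.uIcc α β := Set.uIoc_subset_uIcc hx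
      rw [Real.norm_eq_abs, abs_mul]
      have h1 := hM x hx'
      have h2 := hVb t x ht
      have h3 : (0:ℝ) ≤ |V t x| := abs_nonneg _
      nlinarith [abs_nonneg (f' x)]
    have hA : ‖f β * V t β‖ ≤ |f β| / (2*t) := by
      rw [Real.norm_eq_abs, abs_mul]
      have := hVb t β ht
      have := abs_nonneg (f β)
      calc |f β| * |V t β| ≤ |f β| * (1/(2*t)) := by nlinarith [abs_nonneg (V t β)]
        _ = |f β| / (2*t) := by ring
    have hB : ‖f α * V t α‖ ≤ |f α| / (2*t) := by
      rw [Real.norm_eq_abs, abs_mul]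
      have := hVb t α ht
      have := abs_nonneg (f α)
      calc |f α| * |V t α| ≤ |f α| * (1/(2*t)) := by nlinarith [abs_nonneg (V t α)]
        _ = |f α| / (2*t) := by ring
    calc ‖f β * V t β - f α * V t α - ∫ x in α..β, f' x * V t x‖
        ≤ ‖f β * V t β - f α * V t α‖ + ‖∫ x in α..β, f' x * V t x‖ := norm_sub_le _ _
      _ ≤ (‖f β * V t β‖ + ‖f α * V t α‖) + ‖∫ x in α..β, f' x * V t x‖ := by
          gcongr; exact norm_sub_le _ _
      _ ≤ (|f β| / (2*t) + |f α| / (2*t)) + (M * (1/(2*t))) * |β - α| := by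
          gcongr
      _ = K / (2*t) := by rw [hK]; field_simp
  · have : Tendsto (fun t : ℝ => 2*t) atTop atTop := (tendsto_id.const_mul_atTop (by norm_num))
    exact tendsto_const_nhds.div_atTop this

private lemma osc_cos (f f' : ℝ → ℝ) (α β : ℝ)
    (hf : ∀ x, HasDerivAt f (f' x) x) (hc : Continuous f') :
    Tendsto (fun t => ∫ u in α..β, f u * Real.cos (2*u*t)) atTop (nhds 0) := by
  apply osc_gen f f' α β hf hc _ (fun t x => Real.sin (2*x*t) / (2*t))
  · intro t ht x
    have h2t : (2*t) ≠ 0 := by positivity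
    have h1 : HasDerivAt (fun x : ℝ => 2*x*t) (2*t) x := by
      simpa using ((hasDerivAt_id x).const_mul 2).mul_const t
    have h2 := ((Real.hasDerivAt_sin (2*x*t)).comp x h1).div_const (2*t)
    exact h2.congr_deriv (by field_simp)
  · intro t x ht
    rw [abs_div, abs_of_pos (by positivity : (0:ℝ) < 2*t)]
    gcongr
    exact Real.abs_sin_le_one _
  · intro t; continuity

private lemma osc_sin (f f' : ℝ → ℝ) (α β : ℝ)
    (hf : ∀ x, HasDerivAt f (f' x) x) (hc : Continuous f') :
    Tendsto (fun t => ∫ u in α..β, f u * Real.sin (2*u*t)) atTop (nhds 0) := by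
  apply osc_gen f f' α β hf hc _ (fun t x => -(Real.cos (2*x*t)) / (2*t))
  · intro t ht x
    have h2t : (2*t) ≠ 0 := by positivity
    have h1 : HasDerivAt (fun x : ℝ => 2*x*t) (2*t) x := by
      simpa using ((hasDerivAt_id x).const_mul 2).mul_const t
    have h2 := (((Real.hasDerivAt_cos (2*x*t)).comp x h1).neg).div_const (2*t)
    exact h2.congr_deriv (by field_simp)
  · intro t x ht
    rw [abs_div, abs_of_pos (by positivity : (0:ℝ) < 2*t), abs_neg]
    gcongr
    exact Real.abs_cos_le_one _
  · intro t; continuity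

theorem stmt4 (m ka kb a b : ℝ) (hm : 0 < m) (hka : 0 < ka) (hkb : ka < kb) :
    Filter.Tendsto
      (fun t : ℝ => (1 / (kb - ka)) *
        ∫ ξ in ka..kb,
          (-(ξ / m) * (a * Real.cos (Real.sqrt (ξ / m) * t)
            + (b / Real.sqrt (ξ / m)) * Real.sin (Real.sqrt (ξ / m) * t))) ^ 2)
      Filter.atTop
      (nhds (((ka ^ 2 + ka * kb + kb ^ 2) / (6 * m ^ 2)) * a ^ 2
        + ((ka + kb) / (4 * m)) * b ^ 2)) := by
  have hm' : m ≠ 0 := hm.ne'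
  set ua := Real.sqrt (ka/m) with hua
  set ub := Real.sqrt (kb/m) with hub
  have hua2 : ua^2 = ka/m := Real.sq_sqrt (by positivity)
  have hkb0 : 0 < kb := hka.trans hkb
  have hub2 : ub^2 = kb/m := Real.sq_sqrt (by positivity)
  have hua0 : 0 < ua := Real.sqrt_pos.2 (by positivity)
  have huab : ua ≤ ub := Real.sqrt_le_sqrt (by gcongr)
  -- the smooth version of the integrand
  set G : ℝ → ℝ → ℝ := fun t ξ =>
    (ξ/m)^2*a^2*(Real.cos (Real.sqrt (ξ/m)*t))^2
      + 2*a*b*((ξ/m)*Real.sqrt (ξ/m))*(Real.cos (Real.sqrt (ξ/m)*t))*(Real.sin (Real.sqrt (ξ/m)*t))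
      + (ξ/m)*b^2*(Real.sin (Real.sqrt (ξ/m)*t))^2 with hG
  have hGcont : ∀ t, Continuous (G t) := by
    intro t
    apply Continuous.add
    apply Continuous.add
    · fun_prop
    · fun_prop
    · fun_prop
  -- step 1 : replace integrand
  have step1 : ∀ t : ℝ,
      (∫ ξ in ka..kb,
          (-(ξ / m) * (a * Real.cos (Real.sqrt (ξ / m) * t)
            + (b / Real.sqrt (ξ / m)) * Real.sin (Real.sqrt (ξ / m) * t))) ^ 2)
        = ∫ ξ in ka..kb, G t ξ := by
    intro t
    apply intervalIntegral.integral_congr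
    intro ξ hξ
    rw [Set.uIcc_of_le hkb.le] at hξ
    have hξ0 : 0 < ξ := lt_of_lt_of_le hka hξ.1
    simp only [hG]
    set ω := Real.sqrt (ξ/m) with hω
    have hωpos : 0 < ω := Real.sqrt_pos.2 (by positivity)
    have hω2 : ω^2 = ξ/m := Real.sq_sqrt (by positivity)
    rw [← hω2]
    have hωne : ω ≠ 0 := hωpos.ne'
    field_simp
    ring
  -- step 2 : substitution ξ = m x^2
  have step2 : ∀ t : ℝ,
      (∫ ξ in ka..kb, G t ξ) = ∫ x in ua..ub, (2*m*x) * G t (m*x^2) := by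
    intro t
    have hder : ∀ x ∈ Set.uIcc ua ub, HasDerivAt (fun x : ℝ => m*x^2) (2*m*x) x := by
      intro x _
      have h := (hasDerivAt_pow 2 x).const_mul m
      exact h.congr_deriv (by push_cast; ring)
    have hsub := intervalIntegral.integral_comp_smul_deriv hder
      (by fun_prop : Continuous fun x : ℝ => 2*m*x).continuousOn (hGcont t)
    have hka' : m*ua^2 = ka := by rw [hua2]; field_simp
    have hkb' : m*ub^2 = kb := by rw [hub2]; field_simp
    rw [hka', hkb'] at hsub
    rw [← hsub]
    apply intervalIntegral.integral_congr
    intro x _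
    simp [smul_eq_mul, Function.comp]
  -- step 3 : simplify the substituted integrand
  have step3 : ∀ t : ℝ,
      (∫ x in ua..ub, (2*m*x) * G t (m*x^2))
        = ∫ x in ua..ub, ((m*a^2*x^5 + m*b^2*x^3)
            + (m*a^2*x^5 - m*b^2*x^3)*Real.cos (2*x*t)
            + (2*a*b*m*x^4)*Real.sin (2*x*t)) := by
    intro t
    apply intervalIntegral.integral_congr
    intro x hx
    rw [Set.uIcc_of_le huab] at hx
    have hx0 : 0 < x := lt_of_lt_of_le hua0 hx.1
    have h1 : m*x^2/m = x^2 := by field_simp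
    have h3 : Real.sqrt (x^2) = x := Real.sqrt_sq hx0.le
    simp only [hG, h1, h3]
    rw [mul_assoc 2 x t, Real.cos_two_mul, Real.sin_two_mul]
    linear_combination (2*m*b^2*x^3) * Real.sin_sq_add_cos_sq (x*t)
  -- integrability facts
  have hi1 : IntervalIntegrable (fun x : ℝ => m*a^2*x^5 + m*b^2*x^3) MeasureTheory.volume ua ub :=
    (by fun_prop : Continuous fun x : ℝ => m*a^2*x^5 + m*b^2*x^3).intervalIntegrable _ _
  have hi2 : ∀ t : ℝ, IntervalIntegrable (fun x : ℝ => (m*a^2*x^5 - m*b^2*x^3)*Real.cos (2*x*t))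
      MeasureTheory.volume ua ub :=
    fun t => (by fun_prop :
      Continuous fun x : ℝ => (m*a^2*x^5 - m*b^2*x^3)*Real.cos (2*x*t)).intervalIntegrable _ _
  have hi3 : ∀ t : ℝ, IntervalIntegrable (fun x : ℝ => (2*a*b*m*x^4)*Real.sin (2*x*t))
      MeasureTheory.volume ua ub :=
    fun t => (by fun_prop :
      Continuous fun x : ℝ => (2*a*b*m*x^4)*Real.sin (2*x*t)).intervalIntegrable _ _
  -- step 4 : split
  have step4 : ∀ t : ℝ,
      (∫ x in ua..ub, ((m*a^2*x^5 + m*b^2*x^3)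
            + (m*a^2*x^5 - m*b^2*x^3)*Real.cos (2*x*t)
            + (2*a*b*m*x^4)*Real.sin (2*x*t)))
        = ((∫ x in ua..ub, (m*a^2*x^5 + m*b^2*x^3))
            + (∫ x in ua..ub, (m*a^2*x^5 - m*b^2*x^3)*Real.cos (2*x*t)))
            + ∫ x in ua..ub, (2*a*b*m*x^4)*Real.sin (2*x*t) := by
    intro t
    rw [intervalIntegral.integral_add ((hi1.add (hi2 t))) (hi3 t),
      intervalIntegral.integral_add hi1 (hi2 t)]
  -- the constant part
  have hC : (∫ x in ua..ub, (m*a^2*x^5 + m*b^2*x^3))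
      = m*a^2*((ub^6-ua^6)/6) + m*b^2*((ub^4-ua^4)/4) := by
    rw [intervalIntegral.integral_add
        ((by fun_prop : Continuous fun x : ℝ => m*a^2*x^5).intervalIntegrable _ _)
        ((by fun_prop : Continuous fun x : ℝ => m*b^2*x^3).intervalIntegrable _ _),
      intervalIntegral.integral_const_mul, intervalIntegral.integral_const_mul,
      integral_pow, integral_pow]
    norm_num
  -- oscillatory parts tend to zero
  have hP : Tendsto (fun t => ∫ x in ua..ub, (m*a^2*x^5 - m*b^2*x^3)*Real.cos (2*x*t))
      atTop (nhds 0) := by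
    apply osc_cos _ (fun x => m*a^2*(5*x^4) - m*b^2*(3*x^2))
    · intro x
      have h := ((hasDerivAt_pow 5 x).const_mul (m*a^2)).sub ((hasDerivAt_pow 3 x).const_mul (m*b^2))
      exact h.congr_deriv (by push_cast; ring)
    · fun_prop
  have hQ : Tendsto (fun t => ∫ x in ua..ub, (2*a*b*m*x^4)*Real.sin (2*x*t))
      atTop (nhds 0) := by
    apply osc_sin _ (fun x => 2*a*b*m*(4*x^3))
    · intro x
      have h := (hasDerivAt_pow 4 x).const_mul (2*a*b*m)
      exact h.congr_deriv (by push_cast; ring)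
    · fun_prop
  have hfin := (((tendsto_const_nhds
      (x := m*a^2*((ub^6-ua^6)/6) + m*b^2*((ub^4-ua^4)/4))).add hP).add hQ).const_mul (1/(kb-ka))
  have hval : (1/(kb-ka)) * (((m*a^2*((ub^6-ua^6)/6) + m*b^2*((ub^4-ua^4)/4)) + 0) + 0)
      = ((ka ^ 2 + ka * kb + kb ^ 2) / (6 * m ^ 2)) * a ^ 2 + ((ka + kb) / (4 * m)) * b ^ 2 := by
    have h6a : ua^6 = (ka/m)^3 := by rw [← hua2]; ring
    have h6b : ub^6 = (kb/m)^3 := by rw [← hub2]; ring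
    have h4a : ua^4 = (ka/m)^2 := by rw [← hua2]; ring
    have h4b : ub^4 = (kb/m)^2 := by rw [← hub2]; ring
    rw [h6a, h6b, h4a, h4b]
    have hne : kb - ka ≠ 0 := sub_ne_zero.2 hkb.ne'
    field_simp
    ring
  rw [← hval]
  apply Tendsto.congr _ hfin
  intro t
  simp only [step1 t, step2 t, step3 t, step4 t, hC]
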